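/- Let D be the bipartite straight-line drawing on an (n,n)-double-chain where vertices of the upper chain and lower chain are each labeled 1..n left to right, edges join vertices of different chains, and two edges (i,j) and (k,l) (upper index first) cross if and only if (i−k)(j−l) < 0 or (i = k is false and j = l is false and the order reverses). Color edge (i,j) blue if i < j, red if i > j, and arbitrarily if i = j. Then the number of monochromatic crossings is at most (1/3 + o(1)) times the total number of crossings; i.e., the ratio tends to at most 1/3. -/

import Mathlib

open Finset

namespace Stmt10Aux

variable {n : ℕ}

/-- Pairs of edges. -/
abbrev P (n : ℕ) := (Fin n × Fin n) × (Fin n × Fin n)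

/-- Crossings of the first kind. -/
def F1 (n : ℕ) : Finset (P n) :=
  univ.filter (fun p => p.1.1 < p.2.1 ∧ p.2.2 ≤ p.1.2)

/-- blue-blue crossings of the first kind with all four coordinates distinct. -/
def AA (n : ℕ) : Finset (P n) :=
  univ.filter (fun p => p.1.1 < p.2.1 ∧ p.2.1 < p.2.2 ∧ p.2.2 < p.1.2)

/-- red-red crossings of the first kind with all four coordinates distinct. -/
def BB (n : ℕ) : Finset (P n) :=
  univ.filter (fun p => p.2.2 < p.1.2 ∧ p.1.2 < p.1.1 ∧ p.1.1 < p.2.1)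

lemma two_mul_card (q : P n → Prop) [DecidablePred q] (hq : ∀ p : P n, q p → q p.swap) :
    ((univ : Finset (P n)).filter (fun p =>
        ((p.1.1 < p.2.1 ∧ p.2.2 ≤ p.1.2) ∨ (p.2.1 < p.1.1 ∧ p.1.2 ≤ p.2.2)) ∧ q p)).card
      = 2 * ((univ : Finset (P n)).filter (fun p =>
          (p.1.1 < p.2.1 ∧ p.2.2 ≤ p.1.2) ∧ q p)).card := by
  have hsplit : (univ : Finset (P n)).filter (fun p =>
      ((p.1.1 < p.2.1 ∧ p.2.2 ≤ p.1.2) ∨ (p.2.1 < p.1.1 ∧ p.1.2 ≤ p.2.2)) ∧ q p)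
      = ((univ : Finset (P n)).filter (fun p => (p.1.1 < p.2.1 ∧ p.2.2 ≤ p.1.2) ∧ q p))
        ∪ ((univ : Finset (P n)).filter (fun p => (p.2.1 < p.1.1 ∧ p.1.2 ≤ p.2.2) ∧ q p)) := by
    rw [← filter_or]
    apply filter_congr
    intro p _
    constructor
    · rintro ⟨h | h, hqp⟩
      · exact Or.inl ⟨h, hqp⟩
      · exact Or.inr ⟨h, hqp⟩
    · rintro (⟨h, hqp⟩ | ⟨h, hqp⟩)
      · exact ⟨Or.inl h, hqp⟩
      · exact ⟨Or.inr h, hqp⟩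
  rw [hsplit, card_union_of_disjoint, two_mul]
  · congr 1
    apply card_nbij' Prod.swap Prod.swap
    · intro p hp
      simp only [mem_coe, mem_filter, mem_univ, true_and] at hp ⊢
      exact ⟨hp.1, hq p hp.2⟩
    · intro p hp
      simp only [mem_coe, mem_filter, mem_univ, true_and] at hp ⊢
      exact ⟨hp.1, hq p hp.2⟩
    · intro p _; exact Prod.swap_swap p
    · intro p _; exact Prod.swap_swap p
  · rw [disjoint_left]
    intro p hp hp'
    simp only [mem_filter] at hp hp'
    exact absurd hp'.2.1.1 (not_lt.mpr (le_of_lt hp.2.1.1))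

lemma diag_card_le₁ : ((univ : Finset (P n)).filter (fun p => p.1.1 = p.1.2)).card ≤ n ^ 3 := by
  have key : ((univ : Finset (P n)).filter (fun p => p.1.1 = p.1.2)).card
      ≤ (univ : Finset (Fin n × (Fin n × Fin n))).card := by
    apply card_le_card_of_injOn (fun p : P n => (p.1.1, p.2))
    · intro p _; exact mem_univ _
    · intro p hp p' hp' h
      simp only [coe_filter, Set.mem_setOf_eq, mem_univ, true_and] at hp hp'
      rw [Prod.ext_iff] at h
      obtain ⟨h1, h2⟩ := h
      refine Prod.ext (Prod.ext h1 ?_) h2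
      rw [← hp, ← hp']; exact h1
  simpa [pow_succ, mul_assoc] using key

lemma diag_card_le₂ : ((univ : Finset (P n)).filter (fun p => p.2.1 = p.2.2)).card ≤ n ^ 3 := by
  have key : ((univ : Finset (P n)).filter (fun p => p.2.1 = p.2.2)).card
      ≤ (univ : Finset (Fin n × (Fin n × Fin n))).card := by
    apply card_le_card_of_injOn (fun p : P n => (p.2.1, p.1))
    · intro p _; exact mem_univ _
    · intro p hp p' hp' h
      simp only [coe_filter, Set.mem_setOf_eq, mem_univ, true_and] at hp hp'
      rw [Prod.ext_iff] at h
      obtain ⟨h1, h2⟩ := h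
      refine Prod.ext h2 (Prod.ext h1 ?_)
      rw [← hp, ← hp']; exact h1
  simpa [pow_succ, mul_assoc] using key

lemma diag_card_le₃ : ((univ : Finset (P n)).filter (fun p => p.2.2 = p.1.2)).card ≤ n ^ 3 := by
  have key : ((univ : Finset (P n)).filter (fun p => p.2.2 = p.1.2)).card
      ≤ (univ : Finset (Fin n × (Fin n × Fin n))).card := by
    apply card_le_card_of_injOn (fun p : P n => (p.1.1, p.2))
    · intro p _; exact mem_univ _
    · intro p hp p' hp' h
      simp only [coe_filter, Set.mem_setOf_eq, mem_univ, true_and] at hp hp'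
      rw [Prod.ext_iff] at h
      obtain ⟨h1, h2⟩ := h
      refine Prod.ext (Prod.ext h1 ?_) h2
      rw [← hp, ← hp']; exact congrArg Prod.snd h2
  simpa [pow_succ, mul_assoc] using key

lemma mono_sub (χ : Fin n × Fin n → Bool)
    (hb : ∀ e : Fin n × Fin n, (e.1 : ℕ) < (e.2 : ℕ) → χ e = true)
    (hr : ∀ e : Fin n × Fin n, (e.2 : ℕ) < (e.1 : ℕ) → χ e = false) :
    ((univ : Finset (P n)).filter (fun p => (p.1.1 < p.2.1 ∧ p.2.2 ≤ p.1.2) ∧ χ p.1 = χ p.2)).card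
      ≤ (AA n).card + (BB n).card + 3 * n ^ 3 := by
  have hsub : (univ : Finset (P n)).filter (fun p => (p.1.1 < p.2.1 ∧ p.2.2 ≤ p.1.2) ∧ χ p.1 = χ p.2)
      ⊆ (AA n) ∪ (BB n)
        ∪ ((univ : Finset (P n)).filter (fun p => p.1.1 = p.1.2))
        ∪ ((univ : Finset (P n)).filter (fun p => p.2.1 = p.2.2))
        ∪ ((univ : Finset (P n)).filter (fun p => p.2.2 = p.1.2)) := by
    intro p hp
    simp only [mem_filter, mem_univ, true_and] at hp
    obtain ⟨⟨hik, hlj⟩, hχ⟩ := hp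
    simp only [AA, BB, mem_union, mem_filter, mem_univ, true_and]
    by_cases e1 : p.1.1 = p.1.2
    · exact Or.inl (Or.inl (Or.inr e1))
    by_cases e2 : p.2.1 = p.2.2
    · exact Or.inl (Or.inr e2)
    by_cases e3 : p.2.2 = p.1.2
    · exact Or.inr e3
    have hlj' : p.2.2 < p.1.2 := lt_of_le_of_ne hlj e3
    rcases lt_or_gt_of_ne (fun h => e1 (h : p.1.1 = p.1.2)) with hij | hji
    · -- χ p.1 = true
      have hb1 := hb p.1 hij
      rcases lt_or_gt_of_ne (fun h => e2 (h : p.2.1 = p.2.2)) with hkl | hlk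
      · exact Or.inl (Or.inl (Or.inl (Or.inl ⟨hik, hkl, hlj'⟩)))
      · have := hr p.2 hlk
        rw [hb1, this] at hχ
        exact absurd hχ (by simp)
    · have hr1 := hr p.1 hji
      rcases lt_or_gt_of_ne (fun h => e2 (h : p.2.1 = p.2.2)) with hkl | hlk
      · have := hb p.2 hkl
        rw [hr1, this] at hχ
        exact absurd hχ (by simp)
      · refine Or.inl (Or.inl (Or.inl (Or.inr ⟨hlj', ?_, hik⟩)))
        exact Fin.lt_def.mpr hji
  have h00 := card_le_card hsub
  have s1 := card_union_le (AA n) (BB n)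
  have s2 := card_union_le (AA n ∪ BB n)
    ((univ : Finset (P n)).filter (fun p => p.1.1 = p.1.2))
  have s3 := card_union_le (AA n ∪ BB n ∪ (univ : Finset (P n)).filter (fun p => p.1.1 = p.1.2))
    ((univ : Finset (P n)).filter (fun p => p.2.1 = p.2.2))
  have s4 := card_union_le (AA n ∪ BB n ∪ (univ : Finset (P n)).filter (fun p => p.1.1 = p.1.2)
      ∪ (univ : Finset (P n)).filter (fun p => p.2.1 = p.2.2))
    ((univ : Finset (P n)).filter (fun p => p.2.2 = p.1.2))
  have d1 := diag_card_le₁ (n := n)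
  have d2 := diag_card_le₂ (n := n)
  have d3 := diag_card_le₃ (n := n)
  omega

lemma BB_card_eq : (BB n).card = (AA n).card := by
  apply card_nbij' (fun p : P n => ((p.2.1.rev, p.2.2.rev), (p.1.1.rev, p.1.2.rev)))
    (fun p : P n => ((p.2.1.rev, p.2.2.rev), (p.1.1.rev, p.1.2.rev)))
  · intro p hp
    simp only [BB, AA, mem_coe, mem_filter, mem_univ, true_and] at hp ⊢
    obtain ⟨h1, h2, h3⟩ := hp
    exact ⟨Fin.rev_lt_rev.mpr h3, Fin.rev_lt_rev.mpr h2, Fin.rev_lt_rev.mpr h1⟩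
  · intro p hp
    simp only [BB, AA, mem_coe, mem_filter, mem_univ, true_and] at hp ⊢
    obtain ⟨h1, h2, h3⟩ := hp
    exact ⟨Fin.rev_lt_rev.mpr h3, Fin.rev_lt_rev.mpr h2, Fin.rev_lt_rev.mpr h1⟩
  · intro p _; simp
  · intro p _; simp

/-- The six splittings map. -/
def f6 : P n × Fin 6 → P n := fun x =>
  if x.2.val = 0 then ((x.1.1.1, x.1.1.2), (x.1.2.1, x.1.2.2))
  else if x.2.val = 1 then ((x.1.1.1, x.1.1.2), (x.1.2.2, x.1.2.1))
  else if x.2.val = 2 then ((x.1.1.1, x.1.2.2), (x.1.1.2, x.1.2.1))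
  else if x.2.val = 3 then ((x.1.2.1, x.1.1.2), (x.1.2.2, x.1.1.1))
  else if x.2.val = 4 then ((x.1.2.1, x.1.2.2), (x.1.1.2, x.1.1.1))
  else ((x.1.2.2, x.1.2.1), (x.1.1.2, x.1.1.1))

lemma six_mul_AA_le : 6 * (AA n).card ≤ (F1 n).card := by
  have key : (AA n ×ˢ (univ : Finset (Fin 6))).card ≤ (F1 n).card := by
    apply card_le_card_of_injOn f6
    · rintro ⟨⟨⟨i, j⟩, k, l⟩, t⟩ hx
      rw [mem_coe, mem_product] at hx
      obtain ⟨hx, -⟩ := hx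
      simp only [AA, mem_filter, mem_univ, true_and] at hx
      obtain ⟨h1, h2, h3⟩ := hx
      rw [Fin.lt_def] at h1 h2 h3
      simp only [F1, mem_filter, mem_univ, true_and]
      fin_cases t <;>
        (norm_num [f6];
         exact ⟨Fin.lt_def.mpr (by omega), Fin.le_def.mpr (by omega)⟩)
    · rintro ⟨⟨⟨i, j⟩, k, l⟩, t⟩ hx ⟨⟨⟨i', j'⟩, k', l'⟩, t'⟩ hy hxy
      rw [mem_coe, mem_product] at hx hy
      obtain ⟨hx, -⟩ := hx
      obtain ⟨hy, -⟩ := hy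
      simp only [AA, mem_filter, mem_univ, true_and] at hx hy
      obtain ⟨h1, h2, h3⟩ := hx
      obtain ⟨h1', h2', h3'⟩ := hy
      rw [Fin.lt_def] at h1 h2 h3 h1' h2' h3'
      fin_cases t <;> fin_cases t' <;>
        (norm_num [f6, Prod.ext_iff, Fin.ext_iff] at hxy ⊢) <;> omega
  rw [card_product, card_univ, Fintype.card_fin, mul_comm] at key
  exact key

lemma F1_lower (hn : 2 ≤ n) : n ^ 4 ≤ 64 * (F1 n).card := by
  set h := n / 2 with hh
  have hlt : h < n := Nat.div_lt_self (by omega) (by omega)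
  set a : Fin n := ⟨h, hlt⟩ with ha
  have hA : ((univ : Finset (Fin n)).filter (fun i => i < a)).card = h := by
    have : (univ : Finset (Fin n)).filter (fun i => i < a) = Finset.Iio a := by
      ext i; simp [Finset.mem_Iio]
    rw [this, Fin.card_Iio]
  have hB : ((univ : Finset (Fin n)).filter (fun i => ¬ i < a)).card = n - h := by
    have := card_filter_add_card_filter_not (s := (univ : Finset (Fin n)))
      (p := fun i => i < a)
    rw [card_univ, Fintype.card_fin] at this
    omega
  set A1 := (univ : Finset (Fin n)).filter (fun i => i < a)
  set B1 := (univ : Finset (Fin n)).filter (fun i => ¬ i < a)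
  have hsub : (A1 ×ˢ B1) ×ˢ (B1 ×ˢ A1) ⊆ F1 n := by
    intro p hp
    simp only [mem_product, A1, B1, mem_filter, mem_univ, true_and] at hp
    obtain ⟨⟨hi, hj⟩, hk, hl⟩ := hp
    simp only [F1, mem_filter, mem_univ, true_and]
    exact ⟨lt_of_lt_of_le hi (not_lt.mp hk), le_of_lt (lt_of_lt_of_le hl (not_lt.mp hj))⟩
  have hcard : ((A1 ×ˢ B1) ×ˢ (B1 ×ˢ A1)).card = h * (n - h) * ((n - h) * h) := by
    rw [card_product, card_product, card_product, hA, hB]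
  have hle : h * (n - h) * ((n - h) * h) ≤ (F1 n).card := hcard ▸ card_le_card hsub
  have h1 : n ≤ 4 * h := by omega
  have h2 : n ≤ 2 * (n - h) := by omega
  calc n ^ 4 = n * n * (n * n) := by ring
    _ ≤ (4 * h) * (2 * (n - h)) * ((2 * (n - h)) * (4 * h)) := by
        exact Nat.mul_le_mul (Nat.mul_le_mul h1 h2) (Nat.mul_le_mul h2 h1)
    _ = 64 * (h * (n - h) * ((n - h) * h)) := by ring
    _ ≤ 64 * (F1 n).card := by omega

end Stmt10Aux

/-- Double-chain bipartite drawing: with edges `(i,j)` (upper `i`, lower `j`), where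
edges `(i,j)`, `(k,l)` cross iff `(i<k ∧ l≤j) ∨ (k<i ∧ j≤l)`, and any coloring that is
blue when `i<j` and red when `i>j`, the number of monochromatic crossings is at most
`(1/3 + o(1))` times the total number of crossings. -/
theorem stmt10 :
    ∀ ε : ℝ, 0 < ε → ∃ N : ℕ, ∀ n : ℕ, N ≤ n → ∀ χ : Fin n × Fin n → Bool,
      (∀ e : Fin n × Fin n, (e.1 : ℕ) < (e.2 : ℕ) → χ e = true) →
      (∀ e : Fin n × Fin n, (e.2 : ℕ) < (e.1 : ℕ) → χ e = false) →
      (((Finset.univ : Finset ((Fin n × Fin n) × (Fin n × Fin n))).filter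
          (fun p => ((p.1.1 < p.2.1 ∧ p.2.2 ≤ p.1.2) ∨ (p.2.1 < p.1.1 ∧ p.1.2 ≤ p.2.2)) ∧
            χ p.1 = χ p.2)).card : ℝ)
        ≤ (1 / 3 + ε) *
          (((Finset.univ : Finset ((Fin n × Fin n) × (Fin n × Fin n))).filter
              (fun p => (p.1.1 < p.2.1 ∧ p.2.2 ≤ p.1.2) ∨
                (p.2.1 < p.1.1 ∧ p.1.2 ≤ p.2.2))).card : ℝ) := by
  intro ε hε
  refine ⟨⌈(192 : ℝ) / ε⌉₊ + 2, fun n hn χ hb hr => ?_⟩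
  have hn2 : 2 ≤ n := le_trans (by omega) hn
  -- notation
  set M : ℕ := ((Finset.univ : Finset ((Fin n × Fin n) × (Fin n × Fin n))).filter
      (fun p => ((p.1.1 < p.2.1 ∧ p.2.2 ≤ p.1.2) ∨ (p.2.1 < p.1.1 ∧ p.1.2 ≤ p.2.2)) ∧
        χ p.1 = χ p.2)).card with hM
  set T : ℕ := ((Finset.univ : Finset ((Fin n × Fin n) × (Fin n × Fin n))).filter
      (fun p => (p.1.1 < p.2.1 ∧ p.2.2 ≤ p.1.2) ∨ (p.2.1 < p.1.1 ∧ p.1.2 ≤ p.2.2))).card with hT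
  -- structure results
  have hM2 : M = 2 * ((Finset.univ : Finset (Stmt10Aux.P n)).filter
      (fun p => (p.1.1 < p.2.1 ∧ p.2.2 ≤ p.1.2) ∧ χ p.1 = χ p.2)).card :=
    Stmt10Aux.two_mul_card (fun p => χ p.1 = χ p.2) (fun p hp => hp.symm)
  have hT2 : T = 2 * (Stmt10Aux.F1 n).card := by
    have := Stmt10Aux.two_mul_card (n := n) (fun _ => True) (fun _ _ => trivial)
    simpa [Stmt10Aux.F1] using this
  have key1 : 3 * M ≤ T + 18 * n ^ 3 := by
    have h1 := Stmt10Aux.mono_sub χ hb hr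
    have h2 := Stmt10Aux.BB_card_eq (n := n)
    have h3 := Stmt10Aux.six_mul_AA_le (n := n)
    omega
  have key2 : n ^ 4 ≤ 32 * T := by
    have := Stmt10Aux.F1_lower hn2
    omega
  -- pass to the reals
  have hTpos : (0 : ℝ) < T := by
    have : 0 < T := by
      have : 0 < n ^ 4 := by positivity
      omega
    exact_mod_cast this
  have key1' : 3 * (M : ℝ) ≤ T + 18 * (n : ℝ) ^ 3 := by exact_mod_cast key1
  have key2' : (n : ℝ) ^ 4 ≤ 32 * T := by exact_mod_cast key2
  have hεn : (192 : ℝ) ≤ ε * n := by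
    have h1 : ((192 : ℝ) / ε) ≤ (⌈(192 : ℝ) / ε⌉₊ : ℝ) := Nat.le_ceil _
    have h2 : ((⌈(192 : ℝ) / ε⌉₊ : ℕ) : ℝ) ≤ (n : ℝ) := by exact_mod_cast le_trans (by omega) hn
    have := le_trans h1 h2
    calc (192 : ℝ) = (192 / ε) * ε := by field_simp
      _ ≤ (n : ℝ) * ε := by exact mul_le_mul_of_nonneg_right this (le_of_lt hε)
      _ = ε * n := by ring
  have herr : 6 * (n : ℝ) ^ 3 ≤ ε * T := by
    have hn0 : (0 : ℝ) < n := by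
      have : 0 < n := by omega
      exact_mod_cast this
    have h1 : 192 * (n : ℝ) ^ 3 ≤ ε * (n : ℝ) ^ 4 := by
      have : (192 : ℝ) * (n : ℝ) ^ 3 ≤ (ε * n) * (n : ℝ) ^ 3 := by
        apply mul_le_mul_of_nonneg_right hεn (by positivity)
      calc 192 * (n : ℝ) ^ 3 ≤ (ε * n) * (n : ℝ) ^ 3 := this
        _ = ε * (n : ℝ) ^ 4 := by ring
    have h2 : ε * (n : ℝ) ^ 4 ≤ ε * (32 * T) := mul_le_mul_of_nonneg_left key2' (le_of_lt hε)
    nlinarith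
  nlinarith
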